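/- Let P ∈ ℝ^{d×d} be symmetric and invertible, x ∈ ℝ^d, σ > 0, and set the scalar S = xᵀ P x + σ², the gain vector K = (P x)/S ∈ ℝ^d, and P' = P − S K Kᵀ. Assume S ≠ 0 and that P⁻¹ + σ⁻² x xᵀ is invertible. Then P' = (P⁻¹ + σ⁻² x xᵀ)⁻¹, and for every m ∈ ℝ^d and y ∈ ℝ the recursive mean update equals the batch mean formula: m + K (y − xᵀ m) = P' (σ⁻² x y + P⁻¹ m). -/

import Mathlib

open Matrix

/-- Innovation variance `S = xᵀ P x + σ²` of the single-observation update. -/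
noncomputable def innovVar {d : ℕ} (P : Matrix (Fin d) (Fin d) ℝ) (x : Fin d → ℝ)
    (σ : ℝ) : ℝ :=
  x ⬝ᵥ P.mulVec x + σ ^ 2

/-- Kalman-style gain vector `K = (P x)/S`. -/
noncomputable def gainVec {d : ℕ} (P : Matrix (Fin d) (Fin d) ℝ) (x : Fin d → ℝ)
    (σ : ℝ) : Fin d → ℝ :=
  (innovVar P x σ)⁻¹ • P.mulVec x

/-- Updated posterior covariance `P' = P − S K Kᵀ`. -/
noncomputable def covUpdate {d : ℕ} (P : Matrix (Fin d) (Fin d) ℝ) (x : Fin d → ℝ)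
    (σ : ℝ) : Matrix (Fin d) (Fin d) ℝ :=
  P - innovVar P x σ • vecMulVec (gainVec P x σ) (gainVec P x σ)

lemma aux_mul_vecMulVec {d : ℕ} (M : Matrix (Fin d) (Fin d) ℝ) (a b : Fin d → ℝ) :
    M * vecMulVec a b = vecMulVec (M.mulVec a) b := by
  ext i j
  simp [vecMulVec_apply, Matrix.mul_apply, mulVec, dotProduct, Finset.sum_mul, mul_assoc]

lemma aux_vecMulVec_mul {d : ℕ} (a b : Fin d → ℝ) (M : Matrix (Fin d) (Fin d) ℝ) :
    vecMulVec a b * M = vecMulVec a (vecMul b M) := by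
  ext i j
  simp [vecMulVec_apply, Matrix.mul_apply, vecMul, dotProduct, Finset.mul_sum, mul_assoc]

lemma aux_vecMulVec_mulVec {d : ℕ} (a b v : Fin d → ℝ) :
    (vecMulVec a b).mulVec v = (b ⬝ᵥ v) • a := by
  ext i
  simp only [mulVec, dotProduct, vecMulVec_apply, Pi.smul_apply, smul_eq_mul,
    Finset.mul_sum]
  rw [Finset.sum_mul]
  exact Finset.sum_congr rfl fun k _ => by ring

lemma aux_vecMulVec_smul_left {d : ℕ} (s : ℝ) (a b : Fin d → ℝ) :
    vecMulVec (s • a) b = s • vecMulVec a b := by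
  ext i j; simp [vecMulVec_apply, mul_assoc]

lemma aux_vecMulVec_smul_right {d : ℕ} (s : ℝ) (a b : Fin d → ℝ) :
    vecMulVec a (s • b) = s • vecMulVec a b := by
  ext i j; simp [vecMulVec_apply]; ring

/-- for symmetric invertible `P`, `x ∈ ℝ^d` and `σ > 0`, with `S = xᵀ P x + σ²`,
`K = (P x)/S` and `P' = P − S K Kᵀ`, assuming `S ≠ 0` and that `P⁻¹ + σ⁻² x xᵀ` is invertible,
the rank-one recursive update equals the batch formulas:
`P' = (P⁻¹ + σ⁻² x xᵀ)⁻¹` and `m + K (y − xᵀ m) = P' (σ⁻² x y + P⁻¹ m)` for all `m, y`. -/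
theorem rank_one_bayes_linear_update
    {d : ℕ} (P : Matrix (Fin d) (Fin d) ℝ) (hPsymm : Pᵀ = P) (hP : IsUnit P.det)
    (x : Fin d → ℝ) (σ : ℝ) (hσ : 0 < σ)
    (hS : innovVar P x σ ≠ 0)
    (hB : IsUnit (P⁻¹ + (σ ^ 2)⁻¹ • vecMulVec x x).det) :
    covUpdate P x σ = (P⁻¹ + (σ ^ 2)⁻¹ • vecMulVec x x)⁻¹ ∧
    ∀ (m : Fin d → ℝ) (y : ℝ),
      m + (y - x ⬝ᵥ m) • gainVec P x σ =
        (covUpdate P x σ).mulVec ((σ ^ 2)⁻¹ • (y • x) + P⁻¹.mulVec m) := by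
  have hσ2 : (σ : ℝ) ^ 2 ≠ 0 := pow_ne_zero 2 hσ.ne'
  set S := innovVar P x σ with hSdef
  set u := P.mulVec x with hu
  set c := x ⬝ᵥ P.mulVec x with hc
  have hSc : S = c + σ ^ 2 := rfl
  -- covUpdate simplified
  have hcov : covUpdate P x σ = P - S⁻¹ • vecMulVec u u := by
    unfold covUpdate gainVec
    rw [aux_vecMulVec_smul_left, aux_vecMulVec_smul_right, smul_smul, smul_smul]
    congr 1
    congr 1
    field_simp
    exact div_self hS
  -- vecMul u P⁻¹ = x
  have hvm : vecMul u P⁻¹ = x := by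
    rw [hu, ← vecMul_transpose, hPsymm, vecMul_vecMul,
      Matrix.mul_nonsing_inv _ hP, vecMul_one]
  have hux : u ⬝ᵥ x = c := by
    rw [hu, hc, dotProduct_comm]
  -- key identity: P' * B = 1
  have key : covUpdate P x σ * (P⁻¹ + (σ ^ 2)⁻¹ • vecMulVec x x) = 1 := by
    rw [hcov, sub_mul, mul_add, Matrix.smul_mul, mul_smul_comm,
      Matrix.mul_nonsing_inv _ hP, aux_mul_vecMulVec, mul_add, mul_smul_comm,
      smul_add, aux_vecMulVec_mul, hvm, aux_vecMulVec_mul, ← hu]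
    have hvmx : vecMul u (vecMulVec x x) = (u ⬝ᵥ x) • x := by
      ext j
      simp only [vecMul, dotProduct, vecMulVec_apply, Pi.smul_apply, smul_eq_mul,
        Finset.sum_mul]
      exact Finset.sum_congr rfl fun k _ => by ring
    rw [hvmx, hux, aux_vecMulVec_smul_right]
    have hcoef : (σ ^ 2)⁻¹ - S⁻¹ - S⁻¹ * (σ ^ 2)⁻¹ * c = 0 := by
      field_simp
      rw [hSc]; ring
    calc (1 : Matrix (Fin d) (Fin d) ℝ) + (σ ^ 2)⁻¹ • vecMulVec u x -
        (S⁻¹ • vecMulVec u x + S⁻¹ • (σ ^ 2)⁻¹ • c • vecMulVec u x) =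
        1 + ((σ ^ 2)⁻¹ - S⁻¹ - S⁻¹ * (σ ^ 2)⁻¹ * c) • vecMulVec u x := by module
      _ = 1 := by rw [hcoef, zero_smul, add_zero]
  constructor
  · exact (Matrix.inv_eq_left_inv key).symm
  · intro m y
    -- compute pieces
    have h1 : (covUpdate P x σ).mulVec (P⁻¹.mulVec m) = m - (S⁻¹ * (x ⬝ᵥ m)) • u := by
      rw [Matrix.mulVec_mulVec, hcov, sub_mul, Matrix.mul_nonsing_inv _ hP,
        Matrix.smul_mul, aux_vecMulVec_mul, hvm, Matrix.sub_mulVec, Matrix.one_mulVec,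
        Matrix.smul_mulVec, aux_vecMulVec_mulVec, smul_smul]
    have h2 : (covUpdate P x σ).mulVec x = (σ ^ 2 * S⁻¹) • u := by
      rw [hcov, Matrix.sub_mulVec, Matrix.smul_mulVec, aux_vecMulVec_mulVec,
        ← hu, hux, smul_smul]
      have : (1 : ℝ) - S⁻¹ * c = σ ^ 2 * S⁻¹ := by
        field_simp
        rw [hSc]; ring
      calc u - (S⁻¹ * c) • u = ((1 : ℝ) - S⁻¹ * c) • u := by
            rw [sub_smul, one_smul]
        _ = (σ ^ 2 * S⁻¹) • u := by rw [this]
    rw [Matrix.mulVec_add, h1]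
    have h3 : (covUpdate P x σ).mulVec ((σ ^ 2)⁻¹ • y • x) =
        (y * S⁻¹) • u := by
      rw [Matrix.mulVec_smul, Matrix.mulVec_smul, h2, smul_smul, smul_smul]
      congr 1
      field_simp
    rw [h3]
    unfold gainVec
    rw [← hSdef, ← hu, smul_smul]
    have : (y - x ⬝ᵥ m) * S⁻¹ = y * S⁻¹ - S⁻¹ * (x ⬝ᵥ m) := by ring
    rw [this, sub_smul]
    abel
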